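/- Let V and V' be finite types, let F be a nonempty superset-closed family of finsets of V and F' a nonempty superset-closed family of finsets of V', and let φ be a graph isomorphism from the TAR graph of F to the TAR graph of F' such that |φ(S)| = |S| for every S ∈ F. Then φ maps every minimal member of F to a minimal member of F' of the same cardinality. -/

import Mathlib

variable {V : Type*} [Fintype V] [DecidableEq V]

/-- A family of finsets is superset-closed if it is closed under taking supersets. -/
def SupersetClosed (F : Finset (Finset V)) : Prop :=
  ∀ ⦃S T : Finset V⦄, S ∈ F → S ⊆ T → T ∈ F

/-- A minimal member of a family: a member no proper subset of which is a member. -/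
def IsMinimalMem (F : Finset (Finset V)) (M : Finset V) : Prop :=
  M ∈ F ∧ ∀ M' : Finset V, M' ⊂ M → M' ∉ F

/-- The TAR graph of a family of finsets: vertices are the members of the family,
two members being adjacent iff their symmetric difference has exactly one element. -/
def TARGraph (F : Finset (Finset V)) : SimpleGraph {S : Finset V // S ∈ F} where
  Adj S T := (symmDiff S.1 T.1).card = 1
  symm := ⟨fun S T (h : (symmDiff S.1 T.1).card = 1) => by show (symmDiff T.1 S.1).card = 1; rw [symmDiff_comm]; exact h⟩
  loopless := ⟨fun S (h : (symmDiff S.1 S.1).card = 1) => by simp [symmDiff_self] at h⟩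

instance (F : Finset (Finset V)) : DecidableRel (TARGraph F).Adj :=
  fun S T => inferInstanceAs (Decidable ((symmDiff S.1 T.1).card = 1))

lemma ssubset_of_symmDiff_card {A B : Finset V} (h : (symmDiff A B).card = 1)
    (hlt : B.card < A.card) : B ⊂ A := by
  have hsub : B ⊆ A := by
    intro y hy
    by_contra hyA
    have hmem : y ∈ symmDiff A B := by
      rw [Finset.mem_symmDiff]; exact Or.inr ⟨hy, hyA⟩
    obtain ⟨z, hz⟩ := Finset.card_eq_one.mp h
    rw [hz, Finset.mem_singleton] at hmem
    subst hmem
    -- now symmDiff A B = {y}, and A \ B ⊆ {y} but y ∉ A \ B, so A ⊆ B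
    have hAB : A ⊆ B := by
      intro w hw
      by_contra hwB
      have : w ∈ symmDiff A B := by rw [Finset.mem_symmDiff]; exact Or.inl ⟨hw, hwB⟩
      rw [hz, Finset.mem_singleton] at this
      subst this; exact hwB hy
    exact absurd (Finset.card_le_card hAB) (by omega)
  exact hsub.ssubset_of_ne (fun hEq => by subst hEq; omega)

lemma symmDiff_erase_card {A : Finset V} {x : V} (hx : x ∈ A) :
    (symmDiff A (A.erase x)).card = 1 := by
  have : symmDiff A (A.erase x) = {x} := by
    ext y
    rw [Finset.mem_symmDiff]
    simp only [Finset.mem_erase, Finset.mem_singleton]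
    constructor
    · rintro (⟨hy, h⟩ | ⟨⟨hne, hy⟩, hyA⟩)
      · by_contra hne; exact h ⟨hne, hy⟩
      · exact absurd hy hyA
    · rintro rfl; exact Or.inl ⟨hx, fun h => h.1 rfl⟩
  rw [this, Finset.card_singleton]

theorem stmt11 {V' : Type*} [Fintype V'] [DecidableEq V']
    (F : Finset (Finset V)) (hne : F.Nonempty) (hsup : SupersetClosed F)
    (F' : Finset (Finset V')) (hne' : F'.Nonempty) (hsup' : SupersetClosed F')
    (φ : TARGraph F ≃g TARGraph F')
    (hcard : ∀ S : {S : Finset V // S ∈ F}, (φ S).1.card = S.1.card) :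
    ∀ (M : Finset V) (hM : M ∈ F), IsMinimalMem F M →
      IsMinimalMem F' (φ ⟨M, hM⟩).1 ∧ (φ ⟨M, hM⟩).1.card = M.card := by
  intro M hM hmin
  refine ⟨⟨(φ ⟨M, hM⟩).2, ?_⟩, hcard ⟨M, hM⟩⟩
  intro S' hS' hS'F
  obtain ⟨x, hxφ, hxS'⟩ := Finset.exists_of_ssubset hS'
  have hErase : (φ ⟨M, hM⟩).1.erase x ∈ F' := by
    apply hsup' hS'F
    intro y hy
    exact Finset.mem_erase.2 ⟨fun h => hxS' (h ▸ hy), hS'.1 hy⟩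
  have hadj' : (TARGraph F').Adj (φ ⟨M, hM⟩) ⟨_, hErase⟩ := symmDiff_erase_card hxφ
  set T := φ.symm ⟨_, hErase⟩ with hT
  have hφT : φ T = ⟨_, hErase⟩ := φ.apply_symm_apply _
  have hadj : (TARGraph F).Adj ⟨M, hM⟩ T := by
    rw [← φ.map_adj_iff, hφT]; exact hadj'
  have hTcard : T.1.card = ((φ ⟨M, hM⟩).1.erase x).card := by
    rw [← hcard T, hφT]
  have hcardM : (φ ⟨M, hM⟩).1.card = M.card := hcard ⟨M, hM⟩
  have hlt : T.1.card < M.card := by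
    rw [hTcard, Finset.card_erase_of_mem hxφ, hcardM]
    have : 0 < M.card := by
      rw [← hcardM]; exact Finset.card_pos.2 ⟨x, hxφ⟩
    omega
  have hss : T.1 ⊂ M := ssubset_of_symmDiff_card hadj hlt
  exact hmin.2 T.1 hss T.2
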